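/- Let x, y, z, p, q be elements of a set equipped with functions l, r, L, R into ℝ with l ≤ r and L ≤ R pointwise. Suppose r x < l y, r y < l z, R x < L y, R y < L z (so x, y, z form a chain with pairwise disjoint intervals on both baselines); suppose for each t ∈ {x, y, z} the containments l p ≤ l t, r t ≤ r p, L q ≤ L t, and R t ≤ R q hold; and suppose (r t − l t) + (R t − L t) = 2 for each t ∈ {x, y, z, p, q}. Then a contradiction follows (no such configuration exists). -/
import Mathlib

/-- The arithmetic core of the proof that the proper trapezoid order of the
paper is not a unit trapezoid order: a three-element chain x, y, z with
pairwise disjoint intervals on both baselines cannot have all its lower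
intervals inside the lower interval of an element p and all its upper
intervals inside the upper interval of an element q, if all five trapezoids
are unit trapezoids. -/
theorem no_unit_chain_in_jaws {α : Type*} (l r L R : α → ℝ) (x y z p q : α)
    (hlr : ∀ t, l t ≤ r t) (hLR : ∀ t, L t ≤ R t)
    (hxy : r x < l y) (hyz : r y < l z)
    (hXY : R x < L y) (hYZ : R y < L z)
    (hcont : ∀ t ∈ ({x, y, z} : Set α),
      l p ≤ l t ∧ r t ≤ r p ∧ L q ≤ L t ∧ R t ≤ R q)
    (hunit : ∀ t ∈ ({x, y, z, p, q} : Set α),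
      (r t - l t) + (R t - L t) = 2) :
    False := by
  have hx := hcont x (by simp)
  have hy := hcont y (by simp)
  have hz := hcont z (by simp)
  have ux := hunit x (by simp)
  have uy := hunit y (by simp)
  have uz := hunit z (by simp)
  have up := hunit p (by simp)
  have uq := hunit q (by simp)
  have := hlr p; have := hLR p; have := hlr q; have := hLR q
  obtain ⟨hx1, hx2, hx3, hx4⟩ := hx
  obtain ⟨hy1, hy2, hy3, hy4⟩ := hy
  obtain ⟨hz1, hz2, hz3, hz4⟩ := hz
  linarith
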